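/- For every d ∈ ℕ with d ≥ 1 and every hypergraph H, disc(Δ^d H, 2) ≤ disc(H, 2). -/
import Mathlib

/-- The Stirling numbers of the second kind: `stirling2 d k` is the number of
partitions of a `d`-element set into `k` nonempty parts. -/
def stirling2 : ℕ → ℕ → ℕ
  | 0, 0 => 1
  | 0, _ + 1 => 0
  | _ + 1, 0 => 0
  | d + 1, k + 1 => (k + 1) * stirling2 d (k + 1) + stirling2 d k

/-- The discrepancy of a `c`-coloring `χ` of the hypergraph with edge set `H`. -/
noncomputable def discCol {V : Type} (H : Finset (Finset V)) (c : ℕ) (χ : V → Fin c) : ℝ :=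
  ⨆ E ∈ H, ⨆ i : Fin c, |((E.filter fun v => χ v = i).card : ℝ) - (E.card : ℝ) / (c : ℝ)|

/-- The `c`-color discrepancy of the hypergraph with edge set `H`. -/
noncomputable def disc {V : Type} (H : Finset (Finset V)) (c : ℕ) : ℝ :=
  ⨅ χ : V → Fin c, discCol H c χ

/-- The `d`-fold symmetric product of a hypergraph: edge set `{E^d : E ∈ H}`
on the vertex set `V^d`. -/
def symProd {V : Type} [DecidableEq V] (H : Finset (Finset V)) (d : ℕ) :
    Finset (Finset (Fin d → V)) :=
  H.image fun E => Fintype.piFinset fun _ : Fin d => E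

set_option linter.unusedSectionVars false

section Aux

variable {V : Type} [Fintype V] [DecidableEq V]

lemma discCol_nonneg (H : Finset (Finset V)) (χ : V → Fin 2) : 0 ≤ discCol H 2 χ := by
  unfold discCol
  have hg : ∀ E : Finset V, (0:ℝ) ≤ ⨆ (_ : E ∈ H), ⨆ i : Fin 2,
      |((E.filter fun v => χ v = i).card : ℝ) - (E.card : ℝ) / ((2:ℕ) : ℝ)| := by
    intro E
    by_cases hE : E ∈ H
    · haveI : Nonempty (E ∈ H) := ⟨hE⟩
      rw [ciSup_const]
      exact le_trans (abs_nonneg _)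
        (le_ciSup (f := fun i : Fin 2 =>
          |((E.filter fun v => χ v = i).card : ℝ) - (E.card : ℝ) / ((2:ℕ) : ℝ)|)
          (Set.Finite.bddAbove (Set.finite_range _)) (0 : Fin 2))
    · haveI : IsEmpty (E ∈ H) := ⟨hE⟩
      rw [Real.iSup_of_isEmpty]
  exact le_trans (hg ∅) (le_ciSup (f := fun E : Finset V => ⨆ (_ : E ∈ H), ⨆ i : Fin 2,
    |((E.filter fun v => χ v = i).card : ℝ) - (E.card : ℝ) / ((2:ℕ) : ℝ)|)
    (Set.Finite.bddAbove (Set.finite_range _)) ∅)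

lemma le_discCol (H : Finset (Finset V)) (χ : V → Fin 2) {E : Finset V} (hE : E ∈ H)
    (i : Fin 2) :
    |((E.filter fun v => χ v = i).card : ℝ) - (E.card : ℝ) / ((2:ℕ) : ℝ)| ≤ discCol H 2 χ := by
  unfold discCol
  have h1 : |((E.filter fun v => χ v = i).card : ℝ) - (E.card : ℝ) / ((2:ℕ) : ℝ)|
      ≤ ⨆ j : Fin 2, |((E.filter fun v => χ v = j).card : ℝ) - (E.card : ℝ) / ((2:ℕ) : ℝ)| :=
    le_ciSup (f := fun j : Fin 2 =>
      |((E.filter fun v => χ v = j).card : ℝ) - (E.card : ℝ) / ((2:ℕ) : ℝ)|)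
      (Set.Finite.bddAbove (Set.finite_range _)) i
  haveI : Nonempty (E ∈ H) := ⟨hE⟩
  have h2 : (⨆ j : Fin 2, |((E.filter fun v => χ v = j).card : ℝ) - (E.card : ℝ) / ((2:ℕ) : ℝ)|)
      = ⨆ (_ : E ∈ H), ⨆ j : Fin 2,
          |((E.filter fun v => χ v = j).card : ℝ) - (E.card : ℝ) / ((2:ℕ) : ℝ)| :=
    ciSup_const.symm
  refine h1.trans (h2.le.trans ?_)
  exact le_ciSup (f := fun E : Finset V => ⨆ (_ : E ∈ H), ⨆ j : Fin 2,
    |((E.filter fun v => χ v = j).card : ℝ) - (E.card : ℝ) / ((2:ℕ) : ℝ)|)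
    (Set.Finite.bddAbove (Set.finite_range _)) E

lemma discCol_le {W : Type} [Fintype W] [DecidableEq W] (H : Finset (Finset W)) (χ : W → Fin 2)
    {t : ℝ} (ht : 0 ≤ t)
    (h : ∀ E ∈ H, ∀ i : Fin 2,
      |((E.filter fun v => χ v = i).card : ℝ) - (E.card : ℝ) / ((2:ℕ) : ℝ)| ≤ t) :
    discCol H 2 χ ≤ t := by
  unfold discCol
  refine ciSup_le fun E => ?_
  by_cases hE : E ∈ H
  · haveI : Nonempty (E ∈ H) := ⟨hE⟩
    rw [ciSup_const]
    exact ciSup_le (h E hE)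
  · haveI : IsEmpty (E ∈ H) := ⟨hE⟩
    rw [Real.iSup_of_isEmpty]
    exact ht

variable {d : ℕ}

/-- The least index where `t` differs from `t 0`, or `0` if none. -/
noncomputable def idx (hd : 0 < d) (t : Fin d → V) : Fin d :=
  if h : (Finset.univ.filter fun k => t k ≠ t ⟨0, hd⟩).Nonempty then
    (Finset.univ.filter fun k => t k ≠ t ⟨0, hd⟩).min' h else ⟨0, hd⟩

lemma idx_spec (hd : 0 < d) {t : Fin d → V} (h : ¬ ∀ k, t k = t ⟨0, hd⟩) :
    t (idx hd t) ≠ t ⟨0, hd⟩ := by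
  push_neg at h
  obtain ⟨k, hk⟩ := h
  have hne : (Finset.univ.filter fun k => t k ≠ t ⟨0, hd⟩).Nonempty :=
    ⟨k, by simp [hk]⟩
  have : idx hd t ∈ Finset.univ.filter fun k => t k ≠ t ⟨0, hd⟩ := by
    rw [idx, dif_pos hne]; exact Finset.min'_mem _ _
  simpa using this

/-- Swap the values `t 0` and `t (idx t)` throughout the tuple. -/
noncomputable def swt (hd : 0 < d) (t : Fin d → V) : Fin d → V :=
  fun k => Equiv.swap (t ⟨0, hd⟩) (t (idx hd t)) (t k)

lemma swt_zero (hd : 0 < d) (t : Fin d → V) : swt hd t ⟨0, hd⟩ = t (idx hd t) := by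
  simp [swt]

lemma swt_eq_iff (hd : 0 < d) (t : Fin d → V) (k : Fin d) :
    swt hd t k = swt hd t ⟨0, hd⟩ ↔ t k = t ⟨0, hd⟩ := by
  constructor
  · intro h; exact (Equiv.swap _ _).injective h
  · intro h; rw [swt, swt, h]

lemma swt_not_const (hd : 0 < d) {t : Fin d → V} (h : ¬ ∀ k, t k = t ⟨0, hd⟩) :
    ¬ ∀ k, swt hd t k = swt hd t ⟨0, hd⟩ := by
  intro h'
  exact h fun k => (swt_eq_iff hd t k).mp (h' k)

lemma idx_swt (hd : 0 < d) (t : Fin d → V) : idx hd (swt hd t) = idx hd t := by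
  have hfe : (Finset.univ.filter fun k => swt hd t k ≠ swt hd t ⟨0, hd⟩)
      = Finset.univ.filter fun k => t k ≠ t ⟨0, hd⟩ := by
    ext k
    simp only [Finset.mem_filter, Finset.mem_univ, true_and]
    exact not_congr (swt_eq_iff hd t k)
  rw [idx, idx, hfe]

lemma swt_idx (hd : 0 < d) (t : Fin d → V) : swt hd t (idx hd t) = t ⟨0, hd⟩ := by
  simp [swt]

lemma swt_swt (hd : 0 < d) (t : Fin d → V) : swt hd (swt hd t) = t := by
  funext k
  rw [swt]
  rw [idx_swt hd t, swt_zero, swt_idx]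
  rw [Equiv.swap_comm]
  exact Equiv.swap_apply_self _ _ _

/-- The coloring of tuples induced by a coloring of vertices. -/
noncomputable def chi' (hd : 0 < d) (χ : V → Fin 2) (t : Fin d → V) : Fin 2 :=
  if ∀ k, t k = t ⟨0, hd⟩ then χ (t ⟨0, hd⟩)
  else if Fintype.equivFin V (t ⟨0, hd⟩) < Fintype.equivFin V (t (idx hd t)) then 0 else 1

lemma chi'_const (hd : 0 < d) (χ : V → Fin 2) (v : V) :
    chi' hd χ (fun _ => v) = χ v := by
  rw [chi', if_pos fun _ => rfl]

lemma chi'_swt (hd : 0 < d) (χ : V → Fin 2) {t : Fin d → V}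
    (h : ¬ ∀ k, t k = t ⟨0, hd⟩) :
    chi' hd χ (swt hd t) = 1 - chi' hd χ t := by
  have hne := idx_spec hd h
  have h' := swt_not_const hd h
  have heq : (Fintype.equivFin V) (t ⟨0, hd⟩) ≠ (Fintype.equivFin V) (t (idx hd t)) :=
    fun hc => hne ((Fintype.equivFin V).injective hc).symm
  rw [chi', if_neg h', idx_swt, swt_zero, swt_idx, chi', if_neg h]
  rcases lt_or_gt_of_ne heq with hlt | hgt
  · rw [if_pos hlt, if_neg (not_lt.mpr hlt.le)]; decide
  · rw [if_neg (not_lt.mpr hgt.le), if_pos hgt]; decide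

lemma swt_mem (hd : 0 < d) {E : Finset V} {t : Fin d → V}
    (ht : t ∈ Fintype.piFinset fun _ : Fin d => E) :
    swt hd t ∈ Fintype.piFinset fun _ : Fin d => E := by
  rw [Fintype.mem_piFinset] at ht ⊢
  intro k
  rw [swt, Equiv.swap_apply_def]
  split_ifs <;> apply ht

lemma key (hd : 0 < d) (χ : V → Fin 2) (E : Finset V) (i : Fin 2) :
    |(((Fintype.piFinset fun _ : Fin d => E).filter fun t => chi' hd χ t = i).card : ℝ)
        - (((Fintype.piFinset fun _ : Fin d => E).card : ℝ)) / ((2:ℕ) : ℝ)|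
      = |((E.filter fun v => χ v = i).card : ℝ) - (E.card : ℝ) / ((2:ℕ) : ℝ)| := by
  classical
  set P := Fintype.piFinset fun _ : Fin d => E with hP
  -- split each color class into constant and nonconstant tuples
  have hsplit : ∀ j : Fin 2, ((P.filter fun t => chi' hd χ t = j).card : ℕ)
      = (P.filter fun t => (∀ k, t k = t ⟨0, hd⟩) ∧ chi' hd χ t = j).card
        + (P.filter fun t => ¬ (∀ k, t k = t ⟨0, hd⟩) ∧ chi' hd χ t = j).card := by
    intro j
    rw [← Finset.filter_filter (fun t : Fin d → V => (∀ k, t k = t ⟨0, hd⟩)),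
        ← Finset.filter_filter (fun t : Fin d → V => ¬ (∀ k, t k = t ⟨0, hd⟩)),
        ← Finset.card_filter_add_card_filter_not
          (s := P.filter fun t => chi' hd χ t = j)
          (fun t : Fin d → V => (∀ k, t k = t ⟨0, hd⟩))]
    congr 2
    · rw [Finset.filter_filter, Finset.filter_filter]
      apply Finset.filter_congr
      intro t _
      tauto
    · rw [Finset.filter_filter, Finset.filter_filter]
      apply Finset.filter_congr
      intro t _
      tauto
  -- constant tuples biject with vertices of the same color
  have hconst : ∀ j : Fin 2,
      (P.filter fun t => (∀ k, t k = t ⟨0, hd⟩) ∧ chi' hd χ t = j).card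
        = (E.filter fun v => χ v = j).card := by
    intro j
    refine Finset.card_bij' (fun t _ => t ⟨0, hd⟩) (fun v _ => fun _ => v) ?_ ?_ ?_ ?_
    · intro t ht
      rw [Finset.mem_filter] at ht ⊢
      obtain ⟨htP, hc, hcol⟩ := ht
      have hz : t ⟨0, hd⟩ ∈ E := by
        rw [hP, Fintype.mem_piFinset] at htP; exact htP _
      refine ⟨hz, ?_⟩
      have : t = fun _ => t ⟨0, hd⟩ := funext fun k => hc k
      rw [← chi'_const hd χ (t ⟨0, hd⟩), ← this]; exact hcol
    · intro v hv
      rw [Finset.mem_filter] at hv ⊢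
      refine ⟨?_, fun _ => rfl, by rw [chi'_const]; exact hv.2⟩
      rw [hP, Fintype.mem_piFinset]; exact fun _ => hv.1
    · intro t ht
      rw [Finset.mem_filter] at ht
      exact (funext fun k => ht.2.1 k).symm
    · intro v _
      rfl
  -- nonconstant tuples of the two colors biject via swapping
  have hswap :
      (P.filter fun t => ¬ (∀ k, t k = t ⟨0, hd⟩) ∧ chi' hd χ t = 0).card
        = (P.filter fun t => ¬ (∀ k, t k = t ⟨0, hd⟩) ∧ chi' hd χ t = 1).card := by
    refine Finset.card_bij' (fun t _ => swt hd t) (fun t _ => swt hd t) ?_ ?_ ?_ ?_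
    · intro t ht
      rw [Finset.mem_filter] at ht ⊢
      obtain ⟨htP, hnc, hcol⟩ := ht
      exact ⟨swt_mem hd htP, swt_not_const hd hnc, by rw [chi'_swt hd χ hnc, hcol]; decide⟩
    · intro t ht
      rw [Finset.mem_filter] at ht ⊢
      obtain ⟨htP, hnc, hcol⟩ := ht
      exact ⟨swt_mem hd htP, swt_not_const hd hnc, by rw [chi'_swt hd χ hnc, hcol]; decide⟩
    · intro t _; exact swt_swt hd t
    · intro t _; exact swt_swt hd t
  -- total counts
  have two : ∀ x : Fin 2, (¬ x = 0) ↔ x = 1 := by decide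
  have htot : (P.filter fun t => chi' hd χ t = (0 : Fin 2)).card
      + (P.filter fun t => chi' hd χ t = (1 : Fin 2)).card = P.card := by
    have hnot : (P.filter fun t => ¬ chi' hd χ t = (0 : Fin 2))
        = P.filter fun t => chi' hd χ t = (1 : Fin 2) :=
      Finset.filter_congr fun t _ => two _
    rw [← hnot]
    exact Finset.card_filter_add_card_filter_not _
  have hE : (E.filter fun v => χ v = (0 : Fin 2)).card
      + (E.filter fun v => χ v = (1 : Fin 2)).card = E.card := by
    have hnot : (E.filter fun v => ¬ χ v = (0 : Fin 2))
        = E.filter fun v => χ v = (1 : Fin 2) :=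
      Finset.filter_congr fun v _ => two _
    rw [← hnot]
    exact Finset.card_filter_add_card_filter_not _
  set m := (P.filter fun t => ¬ (∀ k, t k = t ⟨0, hd⟩) ∧ chi' hd χ t = (0 : Fin 2)).card with hm
  set a0 := (E.filter fun v => χ v = (0 : Fin 2)).card with ha0
  set a1 := (E.filter fun v => χ v = (1 : Fin 2)).card with ha1
  have hc0 : (P.filter fun t => chi' hd χ t = (0 : Fin 2)).card = a0 + m := by
    rw [hsplit 0, hconst 0]
  have hc1 : (P.filter fun t => chi' hd χ t = (1 : Fin 2)).card = a1 + m := by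
    rw [hsplit 1, hconst 1, ← hswap]
  have hPcard : P.card = 2 * m + (a0 + a1) := by
    rw [← htot, hc0, hc1]; ring
  have hEcard : E.card = a0 + a1 := hE.symm
  have hci : (P.filter fun t => chi' hd χ t = i).card
      = (E.filter fun v => χ v = i).card + m := by
    fin_cases i
    · exact hc0
    · exact hc1
  rw [hci, hPcard, hEcard]
  push_cast
  congr 1
  ring

end Aux

/-- For every `d ≥ 1` and every hypergraph `H`, `disc(Δ^d H, 2) ≤ disc(H, 2)`. -/
theorem stmt10 (d : ℕ) (hd : 1 ≤ d)
    (V : Type) [Fintype V] [DecidableEq V] (H : Finset (Finset V)) :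
    disc (symProd H d) 2 ≤ disc H 2 := by
  have hd0 : 0 < d := hd
  rw [disc]
  refine le_ciInf fun χ => ?_
  have h1 : disc (symProd H d) 2 ≤ discCol (symProd H d) 2 (chi' hd0 χ) := by
    rw [disc]
    exact ciInf_le ⟨0, by rintro x ⟨χ', rfl⟩; exact discCol_nonneg _ _⟩ _
  refine h1.trans (discCol_le _ _ (discCol_nonneg H χ) ?_)
  intro E' hE' i
  rw [symProd, Finset.mem_image] at hE'
  obtain ⟨E, hE, rfl⟩ := hE'
  rw [key hd0 χ E i]
  exact le_discCol H χ hE i
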